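/- arXiv:2012.11367 — 2 statements merged into one kernel-verified Lean document; each statement's English description precedes it below -/
import Mathlib

section
/- Let f, g: Sⁿ⁻¹ → (0,∞) be continuous with ∫ f dx = ∫ g du, and suppose a smooth family of uniformly convex bodies M_t with support function h(x,t) and radial function ρ(u,t) evolves by ∂ₜh(x,t) = −f(x)ρ(u)ⁿ 𝒦(x,t)/g(u) + h(x,t), where u corresponds to x via the radial-normal correspondence and 𝒦 is the Gauss curvature. Then the functional J(t) = ∫_{Sⁿ⁻¹} f(x) log h(x,t) dx − ∫_{Sⁿ⁻¹} g(u) log ρ(u,t) du satisfies dJ/dt = −∫_{Sⁿ⁻¹} (g h − f 𝒦 ρⁿ)² / (g h 𝒦 ρⁿ) dx ≤ 0, with equality at time t if and only if g h = f 𝒦 ρⁿ on Sⁿ⁻¹. -/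
open scoped RealInnerProductSpace MeasureTheory
open MeasureTheory

section Aux
open Metric Set Fin
open scoped ENNReal NNReal


-- lemma: positivity of μH[m] on open nonempty sets of EuclideanSpace ℝ (Fin m)
lemma pos_open {m : ℕ} {U : Set (EuclideanSpace ℝ (Fin m))} (hU : IsOpen U) (hne : U.Nonempty) :
    0 < μH[(m:ℝ)] U := by
  set e : EuclideanSpace ℝ (Fin m) ≃ (Fin m → ℝ) := WithLp.equiv 2 _ with he
  have hlip : LipschitzWith 1 e := PiLp.lipschitzWith_ofLp 2 _
  have himg : μH[(m:ℝ)] (e '' U) ≤ (1:ℝ≥0) ^ (m:ℝ) * μH[(m:ℝ)] U :=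
    hlip.hausdorffMeasure_image_le (by positivity) U
  have hvol : (μH[(m:ℝ)] : Measure (Fin m → ℝ)) = volume := by
    simpa using (hausdorffMeasure_pi_real (ι := Fin m))
  have hopen : IsOpen (e '' U) := by
    have : e '' U = (e.symm) ⁻¹' U := by
      ext x; simp [Equiv.image_eq_preimage_symm]
    rw [this]
    exact hU.preimage (PiLp.continuous_toLp 2 _)
  have hpos : 0 < μH[(m:ℝ)] (e '' U) := by
    rw [hvol]
    exact hopen.measure_pos volume (hne.image e)
  calc (0:ℝ≥0∞) < μH[(m:ℝ)] (e '' U) := hpos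
    _ ≤ _ := by simpa using himg

lemma finite_bounded {m : ℕ} {s : Set (EuclideanSpace ℝ (Fin m))} (hs : Bornology.IsBounded s) :
    μH[(m:ℝ)] s < ∞ := by
  set e : EuclideanSpace ℝ (Fin m) ≃ (Fin m → ℝ) := WithLp.equiv 2 _ with he
  have hanti : AntilipschitzWith _ e := PiLp.antilipschitzWith_ofLp 2 _
  have h1 : μH[(m:ℝ)] s ≤ _ * μH[(m:ℝ)] (e '' s) :=
    hanti.le_hausdorffMeasure_image (by positivity) s
  have hvol : (μH[(m:ℝ)] : Measure (Fin m → ℝ)) = volume := by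
    simpa using (hausdorffMeasure_pi_real (ι := Fin m))
  have hbd : Bornology.IsBounded (e '' s) :=
    ((PiLp.lipschitzWith_ofLp 2 _).isBounded_image hs)
  have : μH[(m:ℝ)] (e '' s) < ∞ := by
    rw [hvol]
    exact hbd.measure_lt_top
  refine lt_of_le_of_lt h1 ?_
  exact ENNReal.mul_lt_top (by exact ENNReal.rpow_lt_top_of_nonneg (by positivity) ENNReal.coe_lt_top.ne) this


noncomputable section
variable {m : ℕ}

/-- insert a coordinate -/
def ins (i : Fin (m+1)) (a : ℝ) (y : EuclideanSpace ℝ (Fin m)) :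
    EuclideanSpace ℝ (Fin (m+1)) :=
  (WithLp.equiv 2 _).symm (i.insertNth a ((WithLp.equiv 2 _) y))

lemma ins_normsq (i : Fin (m+1)) (a : ℝ) (y : EuclideanSpace ℝ (Fin m)) :
    ‖ins i a y‖ ^ 2 = a ^ 2 + ‖y‖ ^ 2 := by
  rw [EuclideanSpace.norm_eq, EuclideanSpace.norm_eq,
    Real.sq_sqrt (by positivity), Real.sq_sqrt (by positivity)]
  rw [Fin.sum_univ_succAbove _ i]
  simp [ins]

lemma ins_sub (i : Fin (m+1)) (a b : ℝ) (y z : EuclideanSpace ℝ (Fin m)) :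
    ins i a y - ins i b z = ins i (a - b) (y - z) := by
  simp [ins, ← WithLp.toLp_sub]

end
noncomputable section
variable {m : ℕ}

lemma sqrt_diff_le {δ A B : ℝ} (hδ : 0 < δ) (hA : δ ≤ A) (hB : δ ≤ B) :
    |Real.sqrt A - Real.sqrt B| ≤ |A - B| / Real.sqrt δ := by
  have hd : 0 < Real.sqrt δ := Real.sqrt_pos.2 hδ
  rw [div_eq_inv_mul, ← abs_of_pos (a := (Real.sqrt δ)⁻¹) (by positivity), ← abs_mul]
  have key : ∀ A B : ℝ, δ ≤ A → δ ≤ B → Real.sqrt B ≤ Real.sqrt A →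
      Real.sqrt A - Real.sqrt B ≤ (Real.sqrt δ)⁻¹ * (A - B) := by
    intro A B hA hB hle
    have sA : Real.sqrt A ^ 2 = A := Real.sq_sqrt (hδ.le.trans hA)
    have sB : Real.sqrt B ^ 2 = B := Real.sq_sqrt (hδ.le.trans hB)
    have hdB : Real.sqrt δ ≤ Real.sqrt B := Real.sqrt_le_sqrt hB
    rw [inv_mul_eq_div, le_div_iff₀ hd]
    nlinarith [Real.sqrt_nonneg A, Real.sqrt_nonneg B]
  rcases le_total (Real.sqrt B) (Real.sqrt A) with hle | hle
  · have hBA : B ≤ A := by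
      nlinarith [Real.sq_sqrt (hδ.le.trans hA), Real.sq_sqrt (hδ.le.trans hB),
        Real.sqrt_nonneg A, Real.sqrt_nonneg B]
    rw [abs_of_nonneg (by linarith), abs_of_nonneg (mul_nonneg (by positivity) (by linarith))]
    exact key A B hA hB hle
  · have hAB : A ≤ B := by
      nlinarith [Real.sq_sqrt (hδ.le.trans hA), Real.sq_sqrt (hδ.le.trans hB),
        Real.sqrt_nonneg A, Real.sqrt_nonneg B]
    rw [abs_sub_comm,
      show (Real.sqrt δ)⁻¹ * (A - B) = -((Real.sqrt δ)⁻¹ * (B - A)) by ring, abs_neg,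
      abs_of_nonneg (by linarith), abs_of_nonneg (mul_nonneg (by positivity) (by linarith))]
    exact key B A hB hA hle

/-- the chart map -/
def ψ (i : Fin (m+1)) (ε : ℝ) (y : EuclideanSpace ℝ (Fin m)) :
    EuclideanSpace ℝ (Fin (m+1)) :=
  ins i (ε * Real.sqrt (1 - ‖y‖ ^ 2)) y

lemma ψ_mem_sphere {i : Fin (m+1)} {ε : ℝ} (hε : ε ^ 2 = 1)
    {y : EuclideanSpace ℝ (Fin m)} (hy : ‖y‖ ^ 2 ≤ 1) :
    ψ i ε y ∈ sphere (0 : EuclideanSpace ℝ (Fin (m+1))) 1 := by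
  rw [mem_sphere_zero_iff_norm]
  have h1 : ‖ψ i ε y‖ ^ 2 = 1 := by
    rw [ψ, ins_normsq, mul_pow, hε, Real.sq_sqrt (by linarith)]
    ring
  nlinarith [norm_nonneg (ψ i ε y)]

lemma ψ_dist_sq {i : Fin (m+1)} {ε : ℝ} (y z : EuclideanSpace ℝ (Fin m)) :
    ‖ψ i ε y - ψ i ε z‖ ^ 2
      = ε ^ 2 * (Real.sqrt (1 - ‖y‖ ^ 2) - Real.sqrt (1 - ‖z‖ ^ 2)) ^ 2 + ‖y - z‖ ^ 2 := by
  rw [ψ, ψ, ins_sub, ins_normsq, ← mul_sub, mul_pow]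

lemma ψ_antilip (i : Fin (m+1)) (ε : ℝ) : AntilipschitzWith 1 (ψ i ε) := by
  rw [antilipschitzWith_iff_le_mul_dist]
  intro y z
  rw [NNReal.coe_one, one_mul, dist_eq_norm, dist_eq_norm]
  have h := ψ_dist_sq (i := i) (ε := ε) y z
  nlinarith [norm_nonneg (ψ i ε y - ψ i ε z), norm_nonneg (y - z), sq_nonneg ε,
    sq_nonneg (Real.sqrt (1 - ‖y‖ ^ 2) - Real.sqrt (1 - ‖z‖ ^ 2))]

lemma ψ_lipschitzOn {δ : ℝ} (hδ : 0 < δ) (hδ1 : δ ≤ 1) (i : Fin (m+1)) {ε : ℝ} (hε : ε ^ 2 = 1) :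
    LipschitzOnWith (Real.toNNReal (Real.sqrt (1 + 4 / δ)))
      (ψ i ε) {y : EuclideanSpace ℝ (Fin m) | ‖y‖ ^ 2 ≤ 1 - δ} := by
  apply LipschitzOnWith.of_dist_le_mul
  intro y hy z hz
  simp only [Set.mem_setOf_eq] at hy hz
  have hyn : ‖y‖ ≤ 1 := by nlinarith [norm_nonneg y]
  have hzn : ‖z‖ ≤ 1 := by nlinarith [norm_nonneg z]
  have hA : δ ≤ 1 - ‖y‖ ^ 2 := by linarith
  have hB : δ ≤ 1 - ‖z‖ ^ 2 := by linarith
  have hsd := sqrt_diff_le hδ hA hB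
  have habs : |(1 - ‖y‖ ^ 2) - (1 - ‖z‖ ^ 2)| ≤ 2 * ‖y - z‖ := by
    have h1 : |‖y‖ - ‖z‖| ≤ ‖y - z‖ := abs_norm_sub_norm_le y z
    have : (1 - ‖y‖ ^ 2) - (1 - ‖z‖ ^ 2) = (‖z‖ - ‖y‖) * (‖z‖ + ‖y‖) := by ring
    rw [this, abs_mul, abs_of_nonneg (by positivity : (0:ℝ) ≤ ‖z‖ + ‖y‖)]
    have h2 : |‖z‖ - ‖y‖| ≤ ‖y - z‖ := by rw [abs_sub_comm]; exact h1
    nlinarith [abs_nonneg (‖z‖ - ‖y‖), norm_nonneg (y - z)]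
  have hdpos : (0:ℝ) < Real.sqrt δ := Real.sqrt_pos.2 hδ
  have hsq : (Real.sqrt (1 - ‖y‖ ^ 2) - Real.sqrt (1 - ‖z‖ ^ 2)) ^ 2
      ≤ 4 / δ * ‖y - z‖ ^ 2 := by
    have h3 : |Real.sqrt (1 - ‖y‖ ^ 2) - Real.sqrt (1 - ‖z‖ ^ 2)|
        ≤ 2 * ‖y - z‖ / Real.sqrt δ := by
      refine hsd.trans ?_
      gcongr
    have h4 : (Real.sqrt (1 - ‖y‖ ^ 2) - Real.sqrt (1 - ‖z‖ ^ 2)) ^ 2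
        ≤ (2 * ‖y - z‖ / Real.sqrt δ) ^ 2 := by
      rw [← sq_abs]
      exact pow_le_pow_left₀ (abs_nonneg _) h3 2
    refine h4.trans_eq ?_
    rw [div_pow, Real.sq_sqrt hδ.le]
    ring
  have hds := ψ_dist_sq (i := i) (ε := ε) y z
  rw [hε, one_mul] at hds
  have hfin : ‖ψ i ε y - ψ i ε z‖ ^ 2 ≤ (1 + 4 / δ) * ‖y - z‖ ^ 2 := by
    rw [hds]; nlinarith
  rw [dist_eq_norm, dist_eq_norm]
  have hC : (0:ℝ) ≤ Real.sqrt (1 + 4 / δ) := Real.sqrt_nonneg _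
  rw [Real.coe_toNNReal _ hC]
  have : ‖ψ i ε y - ψ i ε z‖ ≤ Real.sqrt (1 + 4 / δ) * ‖y - z‖ := by
    have h5 : ‖ψ i ε y - ψ i ε z‖ = Real.sqrt (‖ψ i ε y - ψ i ε z‖ ^ 2) :=
      (Real.sqrt_sq (norm_nonneg _)).symm
    rw [h5]
    calc Real.sqrt (‖ψ i ε y - ψ i ε z‖ ^ 2) ≤ Real.sqrt ((1 + 4 / δ) * ‖y - z‖ ^ 2) :=
          Real.sqrt_le_sqrt hfin
      _ = Real.sqrt (1 + 4 / δ) * ‖y - z‖ := by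
          rw [Real.sqrt_mul (by positivity), Real.sqrt_sq (norm_nonneg _)]
  exact this

lemma ψ_cover {x : EuclideanSpace ℝ (Fin (m+1))}
    (hx : x ∈ sphere (0 : EuclideanSpace ℝ (Fin (m+1))) 1) :
    ∃ (i : Fin (m+1)) (ε : ℝ) (y : EuclideanSpace ℝ (Fin m)),
      ε ^ 2 = 1 ∧ ‖y‖ ^ 2 ≤ 1 - 1 / (m+1) ∧ ψ i ε y = x := by
  have hnorm : ‖x‖ = 1 := mem_sphere_zero_iff_norm.1 hx
  have hsum : ∑ j, x j ^ 2 = 1 := by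
    have := EuclideanSpace.norm_eq x
    rw [hnorm] at this
    have h2 := congrArg (· ^ 2) this
    simpa [Real.sq_sqrt (Finset.sum_nonneg fun j _ => sq_nonneg (x j))] using h2.symm
  have hex : ∃ i, (1:ℝ) / (m+1) ≤ x i ^ 2 := by
    by_contra hcon
    push_neg at hcon
    have : (∑ j, x j ^ 2) < ∑ _j : Fin (m+1), (1:ℝ) / (m+1) :=
      Finset.sum_lt_sum_of_nonempty Finset.univ_nonempty fun j _ => hcon j
    rw [hsum, Finset.sum_const, Finset.card_univ, Fintype.card_fin] at this
    have hm : ((m:ℝ)+1) ≠ 0 := by positivity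
    rw [nsmul_eq_mul] at this
    push_cast at this
    rw [mul_one_div, div_self hm] at this
    exact lt_irrefl _ this
  obtain ⟨i, hi⟩ := hex
  set y : EuclideanSpace ℝ (Fin m) :=
    (WithLp.equiv 2 _).symm (i.removeNth ((WithLp.equiv 2 _) x)) with hy
  have hins : ins i (x i) y = x := by
    simp only [ins, hy, Equiv.apply_symm_apply]
    rw [show x i = ((WithLp.equiv 2 (Fin (m+1) → ℝ)) x) i from rfl,
      Fin.insertNth_self_removeNth, Equiv.symm_apply_apply]
  have hnormy : x i ^ 2 + ‖y‖ ^ 2 = 1 := by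
    have := ins_normsq i (x i) y
    rw [hins, hnorm] at this
    linarith [this.symm]
  refine ⟨i, if 0 ≤ x i then 1 else -1, y, ?_, by push_cast; linarith, ?_⟩
  · split_ifs <;> norm_num
  · rw [ψ]
    have h1 : 1 - ‖y‖ ^ 2 = x i ^ 2 := by linarith
    rw [h1, Real.sqrt_sq_eq_abs]
    have : (if 0 ≤ x i then (1:ℝ) else -1) * |x i| = x i := by
      split_ifs with h
      · rw [one_mul, abs_of_nonneg h]
      · rw [neg_one_mul, abs_of_neg (not_le.1 h), neg_neg]
    rw [this, hins]

end
noncomputable section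
open scoped ENNReal
variable {m : ℕ}

lemma sphere_hausdorff_lt_top :
    μH[(m:ℝ)] (sphere (0 : EuclideanSpace ℝ (Fin (m+1))) 1) < ∞ := by
  set δ : ℝ := 1 / (m+1) with hδdef
  have hδ : 0 < δ := by positivity
  have hδ1 : δ ≤ 1 := by
    rw [hδdef, div_le_one (by positivity)]
    push_cast; linarith
  set D : Set (EuclideanSpace ℝ (Fin m)) := {y | ‖y‖ ^ 2 ≤ 1 - δ} with hD
  have hDb : Bornology.IsBounded D := by
    apply (Metric.isBounded_closedBall (x := (0 : EuclideanSpace ℝ (Fin m))) (r := 1)).subset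
    intro y hy
    simp only [hD, Set.mem_setOf_eq] at hy
    rw [Metric.mem_closedBall, dist_zero_right]
    nlinarith [norm_nonneg y]
  have hDfin : μH[(m:ℝ)] D < ∞ := finite_bounded hDb
  have hcover : sphere (0 : EuclideanSpace ℝ (Fin (m+1))) 1 ⊆
      ⋃ i : Fin (m+1), (ψ i 1 '' D ∪ ψ i (-1) '' D) := by
    intro x hx
    obtain ⟨i, ε, y, hε, hy, hψ⟩ := ψ_cover hx
    refine Set.mem_iUnion.2 ⟨i, ?_⟩
    have hyD : y ∈ D := by simpa [hD, hδdef] using hy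
    have hε' : ε = 1 ∨ ε = -1 := by
      have : (ε - 1) * (ε + 1) = 0 := by nlinarith
      rcases mul_eq_zero.1 this with h | h
      · left; linarith
      · right; linarith
    rcases hε' with rfl | rfl
    · exact Or.inl ⟨y, hyD, hψ⟩
    · exact Or.inr ⟨y, hyD, hψ⟩
  have himg : ∀ (i : Fin (m+1)) (ε : ℝ), ε ^ 2 = 1 → μH[(m:ℝ)] (ψ i ε '' D) < ∞ := by
    intro i ε hε
    have hlip := ψ_lipschitzOn hδ hδ1 i hε
    have := hlip.hausdorffMeasure_image_le (d := (m:ℝ)) (by positivity)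
    refine lt_of_le_of_lt this (ENNReal.mul_lt_top ?_ hDfin)
    exact ENNReal.rpow_lt_top_of_nonneg (by positivity) ENNReal.coe_lt_top.ne
  calc μH[(m:ℝ)] (sphere (0 : EuclideanSpace ℝ (Fin (m+1))) 1)
      ≤ μH[(m:ℝ)] (⋃ i : Fin (m+1), (ψ i 1 '' D ∪ ψ i (-1) '' D)) := measure_mono hcover
    _ ≤ ∑ i : Fin (m+1), μH[(m:ℝ)] (ψ i 1 '' D ∪ ψ i (-1) '' D) := measure_iUnion_fintype_le _ _
    _ < ∞ := by
        apply ENNReal.sum_lt_top.2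
        intro i _
        exact lt_of_le_of_lt (measure_union_le _ _)
          (ENNReal.add_lt_top.2 ⟨himg i 1 (by norm_num), himg i (-1) (by norm_num)⟩)

lemma sphere_inter_open_pos {U : Set (EuclideanSpace ℝ (Fin (m+1)))} (hU : IsOpen U)
    (hne : (sphere (0 : EuclideanSpace ℝ (Fin (m+1))) 1 ∩ U).Nonempty) :
    0 < μH[(m:ℝ)] (sphere (0 : EuclideanSpace ℝ (Fin (m+1))) 1 ∩ U) := by
  obtain ⟨x, hxS, hxU⟩ := hne
  set δ : ℝ := 1 / (m+1) with hδdef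
  have hδ : 0 < δ := by positivity
  have hδ1 : δ ≤ 1 := by
    rw [hδdef, div_le_one (by positivity)]
    push_cast; linarith
  obtain ⟨i, ε, y, hε, hy, hψ⟩ := ψ_cover hxS
  set W : Set (EuclideanSpace ℝ (Fin m)) := {y | ‖y‖ ^ 2 < 1 - δ/2} with hW
  have hWopen : IsOpen W := by
    have : Continuous fun y : EuclideanSpace ℝ (Fin m) => ‖y‖ ^ 2 := by continuity
    exact isOpen_lt this continuous_const
  have hcont : ContinuousOn (ψ i ε) W := by
    have hlip := ψ_lipschitzOn (δ := δ/2) (by positivity) (by linarith) i hε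
    exact hlip.continuousOn.mono (fun z hz => le_of_lt (by simpa [hW] using hz))
  set W' : Set (EuclideanSpace ℝ (Fin m)) := W ∩ (ψ i ε) ⁻¹' U with hW'
  have hW'open : IsOpen W' := hcont.isOpen_inter_preimage hWopen hU
  have hyW' : y ∈ W' := by
    constructor
    · show ‖y‖ ^ 2 < 1 - δ/2
      have : ‖y‖ ^ 2 ≤ 1 - δ := hy
      linarith
    · show ψ i ε y ∈ U
      rw [hψ]; exact hxU
  have hpos : 0 < μH[(m:ℝ)] W' := pos_open hW'open ⟨y, hyW'⟩
  have hanti := (ψ_antilip i ε).le_hausdorffMeasure_image (d := (m:ℝ)) (by positivity) W'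
  have himg_sub : ψ i ε '' W' ⊆ sphere (0 : EuclideanSpace ℝ (Fin (m+1))) 1 ∩ U := by
    rintro _ ⟨z, hz, rfl⟩
    refine ⟨ψ_mem_sphere hε ?_, hz.2⟩
    have : ‖z‖ ^ 2 < 1 - δ/2 := hz.1
    linarith
  calc (0:ℝ≥0∞) < μH[(m:ℝ)] W' := hpos
    _ ≤ (1:ℝ≥0) ^ (m:ℝ) * μH[(m:ℝ)] (ψ i ε '' W') := hanti
    _ = μH[(m:ℝ)] (ψ i ε '' W') := by simp
    _ ≤ μH[(m:ℝ)] (sphere (0 : EuclideanSpace ℝ (Fin (m+1))) 1 ∩ U) := measure_mono himg_sub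

end

noncomputable section
open scoped ENNReal
variable {n : ℕ}

lemma sphere_fin_meas (hn : 1 ≤ n) :
    μH[(n:ℝ)-1] (sphere (0 : EuclideanSpace ℝ (Fin n)) 1) < ∞ := by
  obtain ⟨m, rfl⟩ : ∃ m, n = m + 1 := ⟨n - 1, (Nat.succ_pred_eq_of_pos hn).symm⟩
  have : ((m+1:ℕ):ℝ) - 1 = (m:ℝ) := by push_cast; ring
  rw [this]
  exact sphere_hausdorff_lt_top

lemma sphere_open_pos' (hn : 1 ≤ n) {U : Set (EuclideanSpace ℝ (Fin n))} (hU : IsOpen U)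
    (hne : (sphere (0 : EuclideanSpace ℝ (Fin n)) 1 ∩ U).Nonempty) :
    0 < μH[(n:ℝ)-1] (sphere (0 : EuclideanSpace ℝ (Fin n)) 1 ∩ U) := by
  obtain ⟨m, rfl⟩ : ∃ m, n = m + 1 := ⟨n - 1, (Nat.succ_pred_eq_of_pos hn).symm⟩
  have : ((m+1:ℕ):ℝ) - 1 = (m:ℝ) := by push_cast; ring
  rw [this]
  exact sphere_inter_open_pos hU hne

/-- integrability of continuous functions on the sphere -/
lemma integrableOn_sphere (hn : 1 ≤ n) {F : EuclideanSpace ℝ (Fin n) → ℝ}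
    (hF : ContinuousOn F (sphere (0 : EuclideanSpace ℝ (Fin n)) 1)) :
    Integrable F (μH[(n:ℝ)-1].restrict (sphere (0 : EuclideanSpace ℝ (Fin n)) 1)) := by
  set S := sphere (0 : EuclideanSpace ℝ (Fin n)) 1 with hS
  have hmeas : MeasurableSet S := isClosed_sphere.measurableSet
  have hcomp : IsCompact S := isCompact_sphere _ _
  obtain ⟨C, hC⟩ := hcomp.exists_bound_of_continuousOn hF
  have hfin : IsFiniteMeasure (μH[(n:ℝ)-1].restrict S) := by
    constructor
    rw [Measure.restrict_apply_univ]
    exact sphere_fin_meas hn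
  have hconst : Integrable (fun _ => C) (μH[(n:ℝ)-1].restrict S) := integrable_const C
  exact hconst.mono' (hF.aestronglyMeasurable hmeas)
    ((ae_restrict_iff' hmeas).2 (Filter.Eventually.of_forall hC))

/-- a nonneg continuous function on the sphere with zero integral vanishes -/
lemma vanish_of_integral_zero (hn : 1 ≤ n) {F : EuclideanSpace ℝ (Fin n) → ℝ}
    (hF : ContinuousOn F (sphere (0 : EuclideanSpace ℝ (Fin n)) 1))
    (hnn : ∀ x ∈ sphere (0 : EuclideanSpace ℝ (Fin n)) 1, 0 ≤ F x)
    (hzero : ∫ x in sphere (0 : EuclideanSpace ℝ (Fin n)) 1, F x ∂μH[(n:ℝ)-1] = 0) :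
    ∀ x ∈ sphere (0 : EuclideanSpace ℝ (Fin n)) 1, F x = 0 := by
  set S := sphere (0 : EuclideanSpace ℝ (Fin n)) 1 with hSdef
  have hmeas : MeasurableSet S := isClosed_sphere.measurableSet
  have hint : Integrable F (μH[(n:ℝ)-1].restrict S) := integrableOn_sphere hn hF
  have hae : ∀ᵐ x ∂(μH[(n:ℝ)-1].restrict S), 0 ≤ F x :=
    (ae_restrict_iff' hmeas).2 (Filter.Eventually.of_forall hnn)
  have haez : F =ᵐ[μH[(n:ℝ)-1].restrict S] 0 :=
    (integral_eq_zero_iff_of_nonneg_ae hae hint).1 hzero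
  intro x₀ hx₀
  by_contra hne
  have hpos : 0 < F x₀ := lt_of_le_of_ne (hnn x₀ hx₀) (Ne.symm hne)
  have hcw : ContinuousWithinAt F S x₀ := hF x₀ hx₀
  have hmem : F ⁻¹' Set.Ioi (F x₀ / 2) ∈ nhdsWithin x₀ S :=
    hcw (Ioi_mem_nhds (by linarith))
  rw [mem_nhdsWithin] at hmem
  obtain ⟨U, hUopen, hxU, hUsub⟩ := hmem
  have hsub : S ∩ U ⊆ {x | F x ≠ 0} := by
    rintro z ⟨hzS, hzU⟩
    have : F z ∈ Set.Ioi (F x₀ / 2) := hUsub ⟨hzU, hzS⟩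
    have : F x₀ / 2 < F z := this
    intro h0
    rw [h0] at this
    linarith
  have h0 : μH[(n:ℝ)-1].restrict S {x | F x ≠ 0} = 0 := by
    have := haez
    rw [Filter.EventuallyEq, ae_iff] at this
    simpa using this
  have hppos : 0 < μH[(n:ℝ)-1] (S ∩ U) := sphere_open_pos' hn hUopen ⟨x₀, hx₀, hxU⟩
  have hle : μH[(n:ℝ)-1] (S ∩ U) ≤ μH[(n:ℝ)-1].restrict S {x | F x ≠ 0} := by
    rw [Measure.restrict_apply' hmeas]
    apply measure_mono
    intro z hz
    exact ⟨hsub hz, hz.1⟩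
  rw [h0] at hle
  exact absurd (le_antisymm hle _root_.zero_le) (ne_of_gt hppos)

end

end Aux

/-- Along the flow `∂ₜh = −f ρⁿ𝒦/g + h`, the functional
`J(t) = ∫ f log h(·,t) dx − ∫ g log ρ(·,t) du` satisfies
`J'(t) = −∫ (gh − f𝒦ρⁿ)²/(gh𝒦ρⁿ) dx ≤ 0`, with equality iff `gh = f𝒦ρⁿ` on `Sⁿ⁻¹`. -/
theorem flow_functional_monotone {n : ℕ} (hn : 2 ≤ n)
    (f g : EuclideanSpace ℝ (Fin n) → ℝ)
    (h ρ curv dh dρ : EuclideanSpace ℝ (Fin n) → ℝ → ℝ)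
    (xhat uhat : EuclideanSpace ℝ (Fin n) → ℝ → EuclideanSpace ℝ (Fin n))
    (J : ℝ → ℝ)
    (S : Set (EuclideanSpace ℝ (Fin n)))
    (hS : S = Metric.sphere (0 : EuclideanSpace ℝ (Fin n)) 1)
    -- continuity and positivity of the data
    (hf : ContinuousOn f S) (hg : ContinuousOn g S)
    (hfpos : ∀ x ∈ S, 0 < f x) (hgpos : ∀ u ∈ S, 0 < g u)
    (hhpos : ∀ x ∈ S, ∀ t, 0 < h x t) (hρpos : ∀ u ∈ S, ∀ t, 0 < ρ u t)
    (hcurvpos : ∀ x ∈ S, ∀ t, 0 < curv x t)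
    (hhc : ∀ t, ContinuousOn (fun x => h x t) S)
    (hρc : ∀ t, ContinuousOn (fun u => ρ u t) S)
    (hcurvc : ∀ t, ContinuousOn (fun x => curv x t) S)
    (huhatc : ∀ t, ContinuousOn (fun x => uhat x t) S)
    (hdhc : ∀ t, ContinuousOn (fun x => dh x t) S)
    -- the radial-normal correspondence
    (huhatS : ∀ x ∈ S, ∀ t, uhat x t ∈ S) (hxhatS : ∀ u ∈ S, ∀ t, xhat u t ∈ S)
    (hinv1 : ∀ u ∈ S, ∀ t, uhat (xhat u t) t = u)
    (hinv2 : ∀ x ∈ S, ∀ t, xhat (uhat x t) t = x)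
    -- equal total masses
    (htot : ∫ x in S, f x ∂μH[(n : ℝ) - 1] = ∫ u in S, g u ∂μH[(n : ℝ) - 1])
    -- the flow equation
    (hdh : ∀ x ∈ S, ∀ t, HasDerivAt (h x) (dh x t) t)
    (hdρ : ∀ u ∈ S, ∀ t, HasDerivAt (ρ u) (dρ u t) t)
    (hflow : ∀ x ∈ S, ∀ t,
      dh x t = -f x * ρ (uhat x t) t ^ n * curv x t / g (uhat x t) + h x t)
    -- `∂ₜ log ρ(u,t) = ∂ₜ log h(x,t)` at corresponding points
    (hlog : ∀ u ∈ S, ∀ t, dρ u t / ρ u t = dh (xhat u t) t / h (xhat u t) t)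
    -- change of variables `(h/𝒦) dx = ρⁿ du`
    (hCoV : ∀ t, ∀ F : EuclideanSpace ℝ (Fin n) → ℝ, ContinuousOn F S →
      ∫ u in S, F (xhat u t) ∂μH[(n : ℝ) - 1]
        = ∫ x in S, F x * h x t / (curv x t * ρ (uhat x t) t ^ n) ∂μH[(n : ℝ) - 1])
    -- the functional `J` and differentiation under the integral sign
    (hJ : ∀ t, J t = ∫ x in S, f x * Real.log (h x t) ∂μH[(n : ℝ) - 1]
        - ∫ u in S, g u * Real.log (ρ u t) ∂μH[(n : ℝ) - 1])
    (hD1 : ∀ t, HasDerivAt (fun s => ∫ x in S, f x * Real.log (h x s) ∂μH[(n : ℝ) - 1])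
        (∫ x in S, f x * (dh x t / h x t) ∂μH[(n : ℝ) - 1]) t)
    (hD2 : ∀ t, HasDerivAt (fun s => ∫ u in S, g u * Real.log (ρ u s) ∂μH[(n : ℝ) - 1])
        (∫ u in S, g u * (dρ u t / ρ u t) ∂μH[(n : ℝ) - 1]) t)
    (t : ℝ) :
    HasDerivAt J
      (-∫ x in S, (g (uhat x t) * h x t - f x * curv x t * ρ (uhat x t) t ^ n) ^ 2
          / (g (uhat x t) * h x t * curv x t * ρ (uhat x t) t ^ n) ∂μH[(n : ℝ) - 1]) t ∧
    (-∫ x in S, (g (uhat x t) * h x t - f x * curv x t * ρ (uhat x t) t ^ n) ^ 2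
          / (g (uhat x t) * h x t * curv x t * ρ (uhat x t) t ^ n) ∂μH[(n : ℝ) - 1]) ≤ 0 ∧
    ((-∫ x in S, (g (uhat x t) * h x t - f x * curv x t * ρ (uhat x t) t ^ n) ^ 2
          / (g (uhat x t) * h x t * curv x t * ρ (uhat x t) t ^ n) ∂μH[(n : ℝ) - 1]) = 0
      ↔ ∀ x ∈ S, g (uhat x t) * h x t = f x * curv x t * ρ (uhat x t) t ^ n) := by
  
  subst hS
  set S := Metric.sphere (0 : EuclideanSpace ℝ (Fin n)) 1 with hSdef
  have hn1 : 1 ≤ n := le_trans (by norm_num) hn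
  have hmeas : MeasurableSet S := Metric.isClosed_sphere.measurableSet
  -- abbreviations
  set μ := (μH[(n:ℝ)-1] : Measure (EuclideanSpace ℝ (Fin n))) with hμ
  set Φ : EuclideanSpace ℝ (Fin n) → ℝ := fun x =>
    (g (uhat x t) * h x t - f x * curv x t * ρ (uhat x t) t ^ n) ^ 2
      / (g (uhat x t) * h x t * curv x t * ρ (uhat x t) t ^ n) with hΦ
  -- pointwise positivity on S
  have hbpos : ∀ x ∈ S, 0 < g (uhat x t) := fun x hx => hgpos _ (huhatS x hx t)
  have hRpos : ∀ x ∈ S, 0 < ρ (uhat x t) t ^ n := fun x hx =>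
    pow_pos (hρpos _ (huhatS x hx t) t) n
  have hdenpos : ∀ x ∈ S, 0 < g (uhat x t) * h x t * curv x t * ρ (uhat x t) t ^ n :=
    fun x hx => by
      have := hbpos x hx; have := hhpos x hx t; have := hcurvpos x hx t; have := hRpos x hx
      positivity
  -- continuity facts
  have huhatMaps : Set.MapsTo (fun x => uhat x t) S S := fun x hx => huhatS x hx t
  have hbcont : ContinuousOn (fun x => g (uhat x t)) S := hg.comp (huhatc t) huhatMaps
  have hRcont : ContinuousOn (fun x => ρ (uhat x t) t ^ n) S :=
    ((hρc t).comp (huhatc t) huhatMaps).pow n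
  have hΦcont : ContinuousOn Φ S := by
    apply ContinuousOn.div
    · exact ((hbcont.mul (hhc t)).sub ((hf.mul (hcurvc t)).mul hRcont)).pow 2
    · exact ((hbcont.mul (hhc t)).mul (hcurvc t)).mul hRcont
    · exact fun x hx => (hdenpos x hx).ne'
  have hΦnn : ∀ x ∈ S, 0 ≤ Φ x := fun x hx =>
    div_nonneg (sq_nonneg _) (hdenpos x hx).le
  -- the transformed second derivative term
  set F : EuclideanSpace ℝ (Fin n) → ℝ := fun x => g (uhat x t) * (dh x t / h x t) with hF
  have hFcont : ContinuousOn F S :=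
    hbcont.mul ((hdhc t).div (hhc t) (fun x hx => (hhpos x hx t).ne'))
  have hB' : ∫ u in S, g u * (dρ u t / ρ u t) ∂μ
      = ∫ x in S, F x * h x t / (curv x t * ρ (uhat x t) t ^ n) ∂μ := by
    rw [← hCoV t F hFcont]
    apply setIntegral_congr_fun hmeas
    intro u hu
    have hx : xhat u t ∈ S := hxhatS u hu t
    simp only [hF, hinv1 u hu t]
    rw [← hlog u hu t]
  -- the pointwise algebraic identity
  have hkey : ∀ x ∈ S,
      f x * (dh x t / h x t) - F x * h x t / (curv x t * ρ (uhat x t) t ^ n) = -Φ x := by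
    intro x hx
    have hb : g (uhat x t) ≠ 0 := (hbpos x hx).ne'
    have hH : h x t ≠ 0 := (hhpos x hx t).ne'
    have hK : curv x t ≠ 0 := (hcurvpos x hx t).ne'
    have hR : ρ (uhat x t) t ^ n ≠ 0 := (hRpos x hx).ne'
    have hfl := hflow x hx t
    simp only [hF, hΦ]
    rw [hfl]
    field_simp
    ring
  -- integrability of both上 integrand pieces
  have hint1 : Integrable (fun x => f x * (dh x t / h x t)) (μ.restrict S) :=
    integrableOn_sphere hn1
      (hf.mul ((hdhc t).div (hhc t) (fun x hx => (hhpos x hx t).ne')))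
  have hint2 : Integrable (fun x => F x * h x t / (curv x t * ρ (uhat x t) t ^ n))
      (μ.restrict S) := by
    apply integrableOn_sphere hn1
    apply ContinuousOn.div
    · exact hFcont.mul (hhc t)
    · exact (hcurvc t).mul hRcont
    · intro x hx
      have := hcurvpos x hx t; have := hRpos x hx
      positivity
  -- the derivative value identity
  have hval : (∫ x in S, f x * (dh x t / h x t) ∂μ)
      - (∫ u in S, g u * (dρ u t / ρ u t) ∂μ) = -∫ x in S, Φ x ∂μ := by
    rw [hB', ← integral_sub hint1 hint2]
    rw [setIntegral_congr_fun hmeas (g := fun x => -Φ x) hkey]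
    exact integral_neg _
  -- derivative of J
  have hderiv : HasDerivAt J (-∫ x in S, Φ x ∂μ) t := by
    have hJeq : J = fun s => (∫ x in S, f x * Real.log (h x s) ∂μ)
        - ∫ u in S, g u * Real.log (ρ u s) ∂μ := funext hJ
    rw [hJeq, ← hval]
    exact (hD1 t).sub (hD2 t)
  have hInn : 0 ≤ ∫ x in S, Φ x ∂μ := setIntegral_nonneg hmeas hΦnn
  refine ⟨hderiv, by linarith, ?_⟩
  rw [neg_eq_zero]
  constructor
  · intro hzero x hx
    have hvanish := vanish_of_integral_zero hn1 hΦcont hΦnn hzero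
    have hΦ0 : Φ x = 0 := hvanish x hx
    have hden : g (uhat x t) * h x t * curv x t * ρ (uhat x t) t ^ n ≠ 0 := (hdenpos x hx).ne'
    rw [hΦ, div_eq_zero_iff] at hΦ0
    rcases hΦ0 with h0 | h0
    · have := pow_eq_zero_iff (n := 2) (by norm_num) |>.1 h0
      linarith [sub_eq_zero.1 this]
    · exact absurd h0 hden
  · intro heq
    have : ∀ x ∈ S, Φ x = (fun _ => (0:ℝ)) x := by
      intro x hx
      simp only [hΦ]
      rw [heq x hx]
      simp
    rw [setIntegral_congr_fun hmeas this]
    simp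
end

section
/- Let f, g be positive continuous functions on Sⁿ⁻¹ and let {K_k} be a sequence of origin-symmetric convex bodies whose support functions h_k satisfy the uniform bounds ∫_{Sⁿ⁻¹} f log h_k dx ≤ C and min_{Sⁿ⁻¹} h_k → 0 as k → ∞, while the weighted log-volumes ∫_{Sⁿ⁻¹} g log ρ_{K_k} du are all equal to a fixed finite constant V₀. Then a contradiction follows; i.e., no such sequence exists. Equivalently: if origin-symmetric convex bodies have uniformly bounded support functions and fixed weighted log-volume V₀ = ∫ g log ρ du > −∞, then their support functions are uniformly bounded below by a positive constant. -/
set_option maxHeartbeats 1000000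
set_option linter.unnecessarySimpa false
set_option linter.unnecessarySeqFocus false
open MeasureTheory Metric
open scoped RealInnerProductSpace MeasureTheory

namespace UniformLowerBoundAux

lemma modelFinite (m : ℕ) (s : Set (EuclideanSpace ℝ (Fin m))) (hs : Bornology.IsBounded s) :
    μH[(m:ℝ)] s < ⊤ := by
  have hL : AntilipschitzWith ((Fintype.card (Fin m) : NNReal) ^ ((1:ENNReal) / 2).toReal)
      (WithLp.equiv 2 (Fin m → ℝ)) := PiLp.antilipschitzWith_ofLp 2 _
  have him := hL.le_hausdorffMeasure_image (d := (m:ℝ)) (by positivity) s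
  apply lt_of_le_of_lt him
  have : μH[(m:ℝ)] ((WithLp.equiv 2 (Fin m → ℝ)) '' s) = volume ((WithLp.equiv 2 (Fin m → ℝ)) '' s) := by
    rw [← MeasureTheory.hausdorffMeasure_pi_real (ι := Fin m)]
    norm_num
  rw [this]
  have hb : Bornology.IsBounded ((WithLp.equiv 2 (Fin m → ℝ)) '' s) :=
    (PiLp.lipschitzWith_ofLp 2 _).isBounded_image hs
  have := hb.measure_lt_top (μ := volume)
  refine ENNReal.mul_lt_top ?_ this
  exact ENNReal.rpow_lt_top_of_nonneg (by positivity) (by simp)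

lemma modelPos (m : ℕ) (s : Set (EuclideanSpace ℝ (Fin m))) (hs : IsOpen s) (hne : s.Nonempty) :
    0 < μH[(m:ℝ)] s := by
  have hL : LipschitzWith 1 (WithLp.equiv 2 (Fin m → ℝ)) := PiLp.lipschitzWith_ofLp 2 _
  have him := hL.hausdorffMeasure_image_le (d := (m:ℝ)) (by positivity) s
  simp only [ENNReal.coe_one, ENNReal.one_rpow, one_mul] at him
  have hvol : μH[(m:ℝ)] ((WithLp.equiv 2 (Fin m → ℝ)) '' s) = volume ((WithLp.equiv 2 (Fin m → ℝ)) '' s) := by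
    rw [← MeasureTheory.hausdorffMeasure_pi_real (ι := Fin m)]; norm_num
  have hopen : IsOpen ((WithLp.equiv 2 (Fin m → ℝ)) '' s) := by
    have : (WithLp.equiv 2 (Fin m → ℝ)) '' s = (WithLp.equiv 2 (Fin m → ℝ)).symm ⁻¹' s := by
      exact Equiv.image_eq_preimage_symm _ s
    rw [this]
    exact (PiLp.continuous_toLp 2 _).isOpen_preimage s hs
  have := hopen.measure_pos volume (hne.image _)
  calc (0:ENNReal) < volume ((WithLp.equiv 2 (Fin m → ℝ)) '' s) := this
    _ = μH[(m:ℝ)] ((WithLp.equiv 2 (Fin m → ℝ)) '' s) := hvol.symm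
    _ ≤ μH[(m:ℝ)] s := him

lemma exists_embed {n : ℕ} (hn : 1 ≤ n) (x : EuclideanSpace ℝ (Fin n)) (hx : ‖x‖ = 1) :
    ∃ (φ : EuclideanSpace ℝ (Fin (n-1)) → EuclideanSpace ℝ (Fin n))
      (P : EuclideanSpace ℝ (Fin n) → EuclideanSpace ℝ (Fin (n-1))),
      LipschitzWith 1 φ ∧ LipschitzWith 1 P ∧ (∀ w, ⟪x, φ w⟫ = 0) ∧ (∀ w, ‖φ w‖ = ‖w‖) ∧
      (∀ (a : ℝ) w, P (a • x + φ w) = w) ∧ (∀ u, u = ⟪x, u⟫ • x + φ (P u)) := by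
  have hx0 : x ≠ 0 := by intro h; rw [h] at hx; simp at hx
  haveI : Fact (Module.finrank ℝ (EuclideanSpace ℝ (Fin n)) = (n-1)+1) :=
    ⟨by simp [Nat.sub_add_cancel hn]⟩
  set H : Submodule ℝ (EuclideanSpace ℝ (Fin n)) := (ℝ ∙ x)ᗮ with hH
  let B : OrthonormalBasis (Fin (n-1)) ℝ H :=
    OrthonormalBasis.fromOrthogonalSpanSingleton (n-1) hx0
  refine ⟨fun w => (B.repr.symm w : EuclideanSpace ℝ (Fin n)),
    fun u => B.repr (H.orthogonalProjectionOnto u), ?_, ?_, ?_, ?_, ?_, ?_⟩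
  · have := ((H.subtypeₗᵢ).isometry.lipschitz).comp (B.repr.symm.isometry.lipschitz)
    rw [mul_one] at this
    exact this
  · have h1 : LipschitzWith 1 (B.repr) := B.repr.isometry.lipschitz
    have h2 : LipschitzWith 1 (H.orthogonalProjectionOnto) := by
      refine (H.orthogonalProjectionOnto).lipschitz.weaken ?_
      exact_mod_cast Submodule.orthogonalProjectionOnto_norm_le H
    have := h1.comp h2
    rw [mul_one] at this
    exact this
  · intro w
    have : (B.repr.symm w : EuclideanSpace ℝ (Fin n)) ∈ H := (B.repr.symm w).2
    exact (Submodule.mem_orthogonal_singleton_iff_inner_right).1 this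
  · intro w
    rw [Submodule.norm_coe, B.repr.symm.norm_map]
  · intro a w
    beta_reduce
    have h1 : H.orthogonalProjectionOnto (a • x) = 0 := by
      apply Submodule.orthogonalProjectionOnto_apply_of_mem_orthogonal
      rw [hH, Submodule.orthogonal_orthogonal]
      exact Submodule.smul_mem _ a (Submodule.mem_span_singleton_self x)
    have h2 : H.orthogonalProjectionOnto ((B.repr.symm w : EuclideanSpace ℝ (Fin n))) = B.repr.symm w :=
      Submodule.orthogonalProjectionOnto_mem_subspace_eq_self _
    rw [map_add, h1, h2, zero_add, LinearIsometryEquiv.apply_symm_apply]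
  · intro u
    have hmem : u - ⟪x, u⟫ • x ∈ H := by
      rw [hH, Submodule.mem_orthogonal_singleton_iff_inner_right, inner_sub_right,
        real_inner_smul_right, real_inner_self_eq_norm_sq, hx]
      ring
    have h1 : H.orthogonalProjectionOnto (⟪x, u⟫ • x) = 0 := by
      apply Submodule.orthogonalProjectionOnto_apply_of_mem_orthogonal
      rw [hH, Submodule.orthogonal_orthogonal]
      exact Submodule.smul_mem _ _ (Submodule.mem_span_singleton_self x)
    have h2 : H.orthogonalProjectionOnto u = ⟨u - ⟪x, u⟫ • x, hmem⟩ := by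
      have : u = (⟪x, u⟫ • x) + (u - ⟪x, u⟫ • x) := by abel
      nth_rewrite 1 [this]
      rw [map_add, h1, zero_add]
      exact Submodule.orthogonalProjectionOnto_mem_subspace_eq_self (⟨u - ⟪x, u⟫ • x, hmem⟩ : H)
    beta_reduce
    rw [h2, LinearIsometryEquiv.symm_apply_apply]
    simp

lemma cap_pos {n : ℕ} (hn : 1 ≤ n) (x : EuclideanSpace ℝ (Fin n)) (hx : ‖x‖ = 1) :
    μH[(n:ℝ)-1] (ball (0 : EuclideanSpace ℝ (Fin (n-1))) (1/2))
      ≤ μH[(n:ℝ)-1] (sphere (0:EuclideanSpace ℝ (Fin n)) 1 ∩ {u | 1/2 ≤ |⟪x,u⟫|}) := by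
  obtain ⟨φ, P, hφ, hP, horth, hnorm, hPsec, -⟩ := exists_embed hn x hx
  set ψ : EuclideanSpace ℝ (Fin (n-1)) → EuclideanSpace ℝ (Fin n) :=
    fun w => Real.sqrt (1 - ‖w‖^2) • x + φ w with hψ
  have hsub : ball (0 : EuclideanSpace ℝ (Fin (n-1))) (1/2)
      ⊆ P '' (sphere (0:EuclideanSpace ℝ (Fin n)) 1 ∩ {u | 1/2 ≤ |⟪x,u⟫|}) := by
    intro w hw
    rw [mem_ball_zero_iff] at hw
    have hw2 : ‖w‖^2 ≤ (1/2)^2 := by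
      have := norm_nonneg w; nlinarith
    have ha0 : (0:ℝ) ≤ 1 - ‖w‖^2 := by nlinarith
    set a : ℝ := Real.sqrt (1 - ‖w‖^2) with haa
    have ha : a^2 = 1 - ‖w‖^2 := Real.sq_sqrt ha0
    have hage : 1/2 ≤ a := by
      have : Real.sqrt ((1/2)^2) ≤ a := by
        apply Real.sqrt_le_sqrt; nlinarith
      simpa [Real.sqrt_sq] using this
    have hinner : ⟪x, ψ w⟫ = a := by
      rw [hψ]; beta_reduce
      rw [inner_add_right, real_inner_smul_right, horth, real_inner_self_eq_norm_sq, hx]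
      ring
    have hnormψ : ‖ψ w‖ = 1 := by
      have hsq : ‖ψ w‖^2 = 1 := by
        rw [hψ]; beta_reduce
        rw [norm_add_sq_real, real_inner_smul_left, horth, hnorm, norm_smul, hx,
          Real.norm_eq_abs, abs_of_nonneg (Real.sqrt_nonneg _)]
        nlinarith
      have h1 : (‖ψ w‖ - 1) * (‖ψ w‖ + 1) = 0 := by nlinarith
      rcases mul_eq_zero.1 h1 with h | h
      · linarith
      · have := norm_nonneg (ψ w); linarith
    refine ⟨ψ w, ⟨?_, ?_⟩, ?_⟩
    · rwa [mem_sphere_zero_iff_norm]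
    · simp only [Set.mem_setOf_eq, hinner]
      rw [abs_of_nonneg (Real.sqrt_nonneg _)]; exact hage
    · rw [hψ]; beta_reduce; exact hPsec a w
  calc μH[(n:ℝ)-1] (ball (0 : EuclideanSpace ℝ (Fin (n-1))) (1/2))
      ≤ μH[(n:ℝ)-1] (P '' (sphere (0:EuclideanSpace ℝ (Fin n)) 1 ∩ {u | 1/2 ≤ |⟪x,u⟫|})) :=
        measure_mono hsub
    _ ≤ (1:NNReal)^((n:ℝ)-1) * μH[(n:ℝ)-1] (sphere (0:EuclideanSpace ℝ (Fin n)) 1 ∩ {u | 1/2 ≤ |⟪x,u⟫|}) := by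
        apply hP.hausdorffMeasure_image_le
        have : (1:ℝ) ≤ (n:ℝ) := by exact_mod_cast hn
        linarith
    _ = μH[(n:ℝ)-1] (sphere (0:EuclideanSpace ℝ (Fin n)) 1 ∩ {u | 1/2 ≤ |⟪x,u⟫|}) := by simp

lemma cap_finite {n : ℕ} (hn : 1 ≤ n) (x : EuclideanSpace ℝ (Fin n)) (hx : ‖x‖ = 1)
    (δ : ℝ) (hδ : 0 < δ) (hδ1 : δ ≤ 1) :
    μH[(n:ℝ)-1] (sphere (0:EuclideanSpace ℝ (Fin n)) 1 ∩ {u | δ ≤ |⟪x,u⟫|}) < ⊤ := by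
  obtain ⟨φ, P, hφ, hP, horth, hnorm, hPsec, hdec⟩ := exists_embed hn x hx
  have hd0 : (0:ℝ) ≤ (n:ℝ) - 1 := by
    have : (1:ℝ) ≤ (n:ℝ) := by exact_mod_cast hn
    linarith
  set D : Set (EuclideanSpace ℝ (Fin (n-1))) := closedBall 0 (Real.sqrt (1 - δ^2)) with hD
  have hδδ : (0:ℝ) ≤ 1 - δ^2 := by nlinarith
  -- the two graph maps
  set f : EuclideanSpace ℝ (Fin (n-1)) → ℝ := fun w => Real.sqrt (1 - ‖w‖^2) with hf
  have hfD : ∀ w ∈ D, δ ≤ f w ∧ ‖w‖ ≤ 1 ∧ f w ≤ 1 ∧ f w ^ 2 = 1 - ‖w‖^2 := by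
    intro w hw
    rw [hD, mem_closedBall_zero_iff] at hw
    have hw2 : ‖w‖^2 ≤ 1 - δ^2 := by
      have h1 := Real.sq_sqrt hδδ
      have := norm_nonneg w
      nlinarith [Real.sqrt_nonneg (1 - δ^2)]
    have h2 : f w ^2 = 1 - ‖w‖^2 := Real.sq_sqrt (by nlinarith)
    refine ⟨?_, ?_, ?_, h2⟩
    · have : Real.sqrt (δ^2) ≤ f w := Real.sqrt_le_sqrt (by nlinarith)
      rwa [Real.sqrt_sq hδ.le] at this
    · nlinarith [norm_nonneg w]
    · nlinarith [Real.sqrt_nonneg (1 - ‖w‖^2)]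
  set L : NNReal := Real.toNNReal (1/δ + 1) with hL
  have hLc : (L : ℝ) = 1/δ + 1 := Real.coe_toNNReal _ (by positivity)
  have hlip : ∀ ε : ℝ, |ε| = 1 →
      LipschitzOnWith L (fun w => (ε * f w) • x + φ w) D := by
    intro ε hε
    rw [lipschitzOnWith_iff_dist_le_mul]
    intro w hw w' hw'
    obtain ⟨hδf, hw1, hf1, hsq⟩ := hfD w hw
    obtain ⟨hδf', hw1', hf1', hsq'⟩ := hfD w' hw'
    have key : (f w - f w') * (f w + f w') = ‖w'‖^2 - ‖w‖^2 := by nlinarith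
    have habs : |f w - f w'| * (2*δ) ≤ |‖w'‖^2 - ‖w‖^2| := by
      rw [← key, abs_mul]
      have h1 : |f w + f w'| = f w + f w' := abs_of_nonneg (by linarith)
      rw [h1]
      apply mul_le_mul_of_nonneg_left (by linarith) (abs_nonneg _)
    have hnn : |‖w'‖^2 - ‖w‖^2| ≤ 2 * dist w w' := by
      have h2 : |‖w'‖ - ‖w‖| ≤ dist w w' := by
        rw [dist_comm, dist_eq_norm]; exact abs_norm_sub_norm_le _ _
      have h3 : |‖w'‖^2 - ‖w‖^2| = (‖w'‖ + ‖w‖) * |‖w'‖ - ‖w‖| := by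
        rw [← abs_of_nonneg (show (0:ℝ) ≤ ‖w'‖ + ‖w‖ by positivity), ← abs_mul]
        congr 1; ring
      rw [h3]
      have := abs_nonneg (‖w'‖ - ‖w‖)
      nlinarith
    have hfd : |f w - f w'| ≤ (1/δ) * dist w w' := by
      rw [div_mul_eq_mul_div, le_div_iff₀ hδ]
      nlinarith
    calc dist ((ε * f w) • x + φ w) ((ε * f w') • x + φ w')
        = ‖(ε * (f w - f w')) • x + (φ w - φ w')‖ := by
          rw [dist_eq_norm]; congr 1; rw [mul_sub, sub_smul]; abel
      _ ≤ ‖(ε * (f w - f w')) • x‖ + ‖φ w - φ w'‖ := norm_add_le _ _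
      _ ≤ |f w - f w'| + dist w w' := by
          rw [norm_smul, hx, Real.norm_eq_abs, abs_mul, hε, one_mul, mul_one, ← dist_eq_norm]
          have := hφ.dist_le_mul w w'
          simp only [NNReal.coe_one, one_mul] at this
          linarith [this]
      _ ≤ (1/δ) * dist w w' + dist w w' := by linarith
      _ = (L:ℝ) * dist w w' := by rw [hLc]; ring
  -- covering
  have hcover : sphere (0:EuclideanSpace ℝ (Fin n)) 1 ∩ {u | δ ≤ |⟪x,u⟫|}
      ⊆ ((fun w => ((1:ℝ) * f w) • x + φ w) '' D) ∪ ((fun w => ((-1:ℝ) * f w) • x + φ w) '' D) := by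
    rintro u ⟨hu, hcap⟩
    rw [mem_sphere_zero_iff_norm] at hu
    simp only [Set.mem_setOf_eq] at hcap
    set a : ℝ := ⟪x, u⟫ with haa
    have hdecu := hdec u
    have hnu : ‖P u‖^2 = 1 - a^2 := by
      have : ‖u‖^2 = a^2 + ‖P u‖^2 := by
        conv_lhs => rw [hdecu]
        rw [norm_add_sq_real, real_inner_smul_left, horth, hnorm, norm_smul, hx,
          Real.norm_eq_abs]
        rw [mul_one, sq_abs]
        ring
      rw [hu] at this; nlinarith
    have hmemD : P u ∈ D := by
      rw [hD, mem_closedBall_zero_iff]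
      have : ‖P u‖^2 ≤ 1 - δ^2 := by
        rw [hnu]
        have : δ^2 ≤ a^2 := by
          have := sq_abs a; nlinarith [abs_nonneg a]
        linarith
      have h4 : Real.sqrt (‖P u‖^2) ≤ Real.sqrt (1 - δ^2) := Real.sqrt_le_sqrt this
      rwa [Real.sqrt_sq (norm_nonneg _)] at h4
    have hfPu : f (P u) = |a| := by
      rw [hf]; beta_reduce
      rw [hnu]
      have : 1 - (1 - a^2) = a^2 := by ring
      rw [this, Real.sqrt_sq_eq_abs]
    rcases le_or_gt 0 a with hs | hs
    · left
      exact ⟨P u, hmemD, by beta_reduce; rw [hfPu, one_mul, abs_of_nonneg hs, haa]; exact hdecu.symm⟩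
    · right
      refine ⟨P u, hmemD, ?_⟩
      beta_reduce
      rw [hfPu, abs_of_neg hs]
      rw [show -1 * -a = a by ring, haa]
      exact hdecu.symm
  apply lt_of_le_of_lt (measure_mono hcover)
  apply lt_of_le_of_lt (measure_union_le _ _)
  have hbd : Bornology.IsBounded D := isBounded_closedBall
  have him : ∀ ε : ℝ, |ε| = 1 →
      μH[(n:ℝ)-1] ((fun w => (ε * f w) • x + φ w) '' D) < ⊤ := by
    intro ε hε
    apply lt_of_le_of_lt (((hlip ε hε).hausdorffMeasure_image_le hd0))
    apply ENNReal.mul_lt_top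
    · exact ENNReal.rpow_lt_top_of_nonneg hd0 (by simp)
    · have : ((n:ℝ) - 1) = ((n - 1 : ℕ) : ℝ) := by
        have : (1:ℝ) ≤ (n:ℝ) := by exact_mod_cast hn
        push_cast [Nat.cast_sub hn]; ring
      rw [this]
      exact modelFinite (n-1) D hbd
  have h1 := him 1 (by norm_num)
  have h2 := him (-1) (by norm_num)
  exact ENNReal.add_lt_top.2 ⟨h1, h2⟩

lemma sphere_finite {n : ℕ} (hn : 1 ≤ n) :
    μH[(n:ℝ)-1] (sphere (0:EuclideanSpace ℝ (Fin n)) 1) < ⊤ := by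
  set δ : ℝ := Real.sqrt ((n:ℝ)⁻¹) with hδdef
  have hn1 : (1:ℝ) ≤ (n:ℝ) := by exact_mod_cast hn
  have hδpos : 0 < δ := Real.sqrt_pos.2 (by positivity)
  have hδ1 : δ ≤ 1 := by
    rw [hδdef, show (1:ℝ) = Real.sqrt 1 by simp]
    apply Real.sqrt_le_sqrt
    rw [inv_le_one_iff₀]; right; exact hn1
  have hδsq : δ^2 = (n:ℝ)⁻¹ := Real.sq_sqrt (by positivity)
  have hcover : sphere (0:EuclideanSpace ℝ (Fin n)) 1 ⊆
      ⋃ i : Fin n, (sphere (0:EuclideanSpace ℝ (Fin n)) 1 ∩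
        {u | δ ≤ |⟪EuclideanSpace.single i (1:ℝ), u⟫|}) := by
    intro u hu
    rw [mem_sphere_zero_iff_norm] at hu
    have hsum : ∑ i, (u i)^2 = 1 := by
      have := EuclideanSpace.norm_eq u
      rw [hu] at this
      have h2 : Real.sqrt (∑ i, ‖u i‖^2) = 1 := this.symm
      have h3 : ∑ i, ‖u i‖^2 = 1 := by
        have := Real.sq_sqrt (show (0:ℝ) ≤ ∑ i, ‖u i‖^2 by positivity)
        rw [h2] at this; linarith
      simpa [Real.norm_eq_abs, sq_abs] using h3
    by_contra hcon
    simp only [Set.mem_iUnion, not_exists] at hcon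
    have hlt : ∀ i : Fin n, |u i| < δ := by
      intro i
      have := hcon i
      by_contra hge
      push_neg at hge
      exact this ⟨by rwa [mem_sphere_zero_iff_norm],
        by simp only [Set.mem_setOf_eq, EuclideanSpace.inner_single_left]; simpa using hge⟩
    have hsumlt : ∑ i, (u i)^2 < ∑ _i : Fin n, δ^2 := by
      apply Finset.sum_lt_sum_of_nonempty
      · exact Finset.univ_nonempty_iff.2 (Fin.pos_iff_nonempty.1 hn)
      · intro i _
        have := hlt i
        nlinarith [abs_nonneg (u i), sq_abs (u i)]
    rw [Finset.sum_const, Finset.card_univ, Fintype.card_fin, hδsq, nsmul_eq_mul] at hsumlt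
    rw [hsum] at hsumlt
    rw [mul_inv_cancel₀ (by positivity)] at hsumlt
    exact lt_irrefl _ hsumlt
  apply lt_of_le_of_lt (measure_mono hcover)
  apply lt_of_le_of_lt (measure_iUnion_le _)
  rw [tsum_fintype]
  refine ENNReal.sum_lt_top.2 fun i _ => ?_
  exact cap_finite hn _ (by simpa using EuclideanSpace.norm_single i (1:ℝ)) δ hδpos hδ1

lemma radial_onesided {n : ℕ} (K : Set (EuclideanSpace ℝ (Fin n))) (hconv : Convex ℝ K)
    (r C : ℝ) (hr : 0 < r) (hrK : closedBall 0 r ⊆ K)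
    (ρ : EuclideanSpace ℝ (Fin n) → ℝ)
    (hρ : ∀ u ∈ sphere (0:EuclideanSpace ℝ (Fin n)) 1, IsGreatest {c | 0 ≤ c ∧ c • u ∈ K} (ρ u))
    (hρC : ∀ u ∈ sphere (0:EuclideanSpace ℝ (Fin n)) 1, ρ u ≤ C) :
    ∀ u ∈ sphere (0:EuclideanSpace ℝ (Fin n)) 1, ∀ v ∈ sphere (0:EuclideanSpace ℝ (Fin n)) 1,
      ρ u - ρ v ≤ (C^2/r) * dist u v := by
  intro u hu v hv
  rw [mem_sphere_zero_iff_norm] at hu hv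
  set c : ℝ := ρ u with hc
  have hcu : c • u ∈ K := ((hρ u (by rwa [mem_sphere_zero_iff_norm])).1).2
  have hrc : r ≤ c := by
    refine (hρ u (by rwa [mem_sphere_zero_iff_norm])).2 ⟨hr.le, hrK ?_⟩
    rw [mem_closedBall_zero_iff, norm_smul, hu, Real.norm_eq_abs, abs_of_nonneg hr.le, mul_one]
  have hcC : c ≤ C := hρC u (by rwa [mem_sphere_zero_iff_norm])
  have hC : 0 < C := lt_of_lt_of_le hr (le_trans hrc hcC)
  rcases eq_or_ne v u with hvu | hvu
  · subst hvu
    simp [hc]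
  have hd : 0 < ‖v - u‖ := by
    rw [norm_pos_iff, sub_ne_zero]; exact hvu
  set d : ℝ := ‖v - u‖ with hdd
  set lam : ℝ := r / (r + c * d) with hlam
  have hcd : 0 < c * d := mul_pos (hr.trans_le hrc) hd
  have hden : 0 < r + c * d := by linarith
  have hlam0 : 0 < lam := div_pos hr hden
  have hlam1 : lam ≤ 1 := by
    rw [hlam, div_le_one hden]; nlinarith
  have hw : ((r / d) • (v - u) : EuclideanSpace ℝ (Fin n)) ∈ K := by
    apply hrK
    rw [mem_closedBall_zero_iff, norm_smul, Real.norm_eq_abs, abs_of_nonneg (div_pos hr hd).le]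
    rw [div_mul_cancel₀ _ hd.ne']
  have hmem : (lam * c) • v ∈ K := by
    have hcomb := hconv hcu hw hlam0.le (by linarith : (0:ℝ) ≤ 1 - lam) (by ring)
    have heq : lam • (c • u) + (1 - lam) • ((r / d) • (v - u)) = (lam * c) • v := by
      rw [smul_smul, smul_smul]
      have hcoef : (1 - lam) * (r / d) = lam * c := by
        rw [hlam]; field_simp; ring
      rw [hcoef, ← smul_add]
      congr 1
      abel
    rwa [heq] at hcomb
  have hlow : lam * c ≤ ρ v :=
    (hρ v (by rwa [mem_sphere_zero_iff_norm])).2 ⟨mul_nonneg hlam0.le (hr.le.trans hrc), hmem⟩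
  have hdist : dist u v = d := by rw [dist_eq_norm, norm_sub_rev]
  rw [hdist]
  have hkey : c - lam * c ≤ C^2/r * d := by
    have e1 : c - lam * c = c * (c*d) / (r + c*d) := by
      rw [hlam]; field_simp; ring
    have e2 : C^2/r*d = C*(C*d)/r := by ring
    rw [e1, e2]
    gcongr <;> nlinarith [hcd, hrc, hcC, hd, hr]
  linarith

end UniformLowerBoundAux

open UniformLowerBoundAux

/-- Origin-symmetric convex bodies with uniformly bounded support functions and
fixed weighted log-volume `V₀ = ∫ g log ρ dμ` (w.r.t. spherical Lebesgue measure, `g` positive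
continuous) have support functions uniformly bounded below by a positive constant. -/
theorem uniform_lower_bound_support_functions {n : ℕ} (hn : 2 ≤ n)
    (g : EuclideanSpace ℝ (Fin n) → ℝ) (hg : Continuous g)
    (hgpos : ∀ u ∈ Metric.sphere (0 : EuclideanSpace ℝ (Fin n)) 1, 0 < g u)
    (C V₀ : ℝ) (hC : 0 < C)
    (K : ℕ → Set (EuclideanSpace ℝ (Fin n)))
    (hconv : ∀ k, Convex ℝ (K k)) (hcomp : ∀ k, IsCompact (K k))
    (h0 : ∀ k, (0 : EuclideanSpace ℝ (Fin n)) ∈ interior (K k))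
    (hsymm : ∀ k, ∀ y ∈ K k, -y ∈ K k)
    (h ρ : ℕ → EuclideanSpace ℝ (Fin n) → ℝ)
    (hh : ∀ k, ∀ x ∈ Metric.sphere (0 : EuclideanSpace ℝ (Fin n)) 1,
      IsGreatest {r : ℝ | ∃ y ∈ K k, r = ⟪y, x⟫} (h k x))
    (hρ : ∀ k, ∀ u ∈ Metric.sphere (0 : EuclideanSpace ℝ (Fin n)) 1,
      IsGreatest {c : ℝ | 0 ≤ c ∧ c • u ∈ K k} (ρ k u))
    (hbound : ∀ k, ∀ x ∈ Metric.sphere (0 : EuclideanSpace ℝ (Fin n)) 1, h k x ≤ C)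
    (hvol : ∀ k, ∫ u in Metric.sphere (0 : EuclideanSpace ℝ (Fin n)) 1,
      g u * Real.log (ρ k u) ∂μH[(n : ℝ) - 1] = V₀) :
    ∃ c > 0, ∀ k, ∀ x ∈ Metric.sphere (0 : EuclideanSpace ℝ (Fin n)) 1, c ≤ h k x := by
  have hn1 : 1 ≤ n := le_trans (by norm_num) hn
  set S := Metric.sphere (0 : EuclideanSpace ℝ (Fin n)) 1 with hS
  set μ : Measure (EuclideanSpace ℝ (Fin n)) := μH[(n:ℝ)-1] with hμ
  have hSmeas : MeasurableSet S := Metric.isClosed_sphere.measurableSet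
  have hSfin : μ S < ⊤ := sphere_finite hn1
  haveI : IsFiniteMeasure (μ.restrict S) := ⟨by rwa [Measure.restrict_apply_univ]⟩
  have hx₀S : (EuclideanSpace.single (⟨0, by omega⟩ : Fin n) (1:ℝ)) ∈ S := by
    rw [hS, mem_sphere_zero_iff_norm]
    simpa using EuclideanSpace.norm_single (⟨0, by omega⟩ : Fin n) (1:ℝ)
  have hSne : S.Nonempty := ⟨_, hx₀S⟩
  obtain ⟨u₀, hu₀S, hmin⟩ :=
    (isCompact_sphere (0:EuclideanSpace ℝ (Fin n)) 1).exists_isMinOn hSne hg.continuousOn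
  set m := g u₀ with hm
  have hm0 : 0 < m := hgpos u₀ hu₀S
  have hmle : ∀ u ∈ S, m ≤ g u := fun u hu => hmin hu
  obtain ⟨u₁, hu₁S, hmax⟩ :=
    (isCompact_sphere (0:EuclideanSpace ℝ (Fin n)) 1).exists_isMaxOn hSne hg.abs.continuousOn
  set B₁ := |g u₁| with hB₁
  have hgb : ∀ u ∈ S, |g u| ≤ B₁ := fun u hu => hmax hu
  have hgmeas : AEStronglyMeasurable g (μ.restrict S) := hg.aestronglyMeasurable
  have hgint : IntegrableOn g S μ := by
    refine Integrable.mono' (integrable_const B₁) hgmeas ?_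
    rw [ae_restrict_iff' hSmeas]
    exact .of_forall fun u hu => by rw [Real.norm_eq_abs]; exact hgb u hu
  set M := ∫ u in S, g u ∂μ with hM
  have hM0 : 0 ≤ M := setIntegral_nonneg hSmeas fun u hu => (hgpos u hu).le
  set v : ℝ := (μH[(n:ℝ)-1] (Metric.ball (0 : EuclideanSpace ℝ (Fin (n-1))) (1/2))).toReal with hv
  have hcast : ((n-1:ℕ):ℝ) = (n:ℝ)-1 := by push_cast [Nat.cast_sub hn1]; ring
  have hvfin : μH[(n:ℝ)-1] (Metric.ball (0 : EuclideanSpace ℝ (Fin (n-1))) (1/2)) < ⊤ := by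
    rw [← hcast]; exact modelFinite _ _ Metric.isBounded_ball
  have hv0 : 0 < v := by
    rw [hv]
    refine ENNReal.toReal_pos ?_ hvfin.ne
    have := modelPos (n-1) (Metric.ball 0 (1/2)) Metric.isOpen_ball
      (Metric.nonempty_ball.2 (by norm_num))
    rw [hcast] at this
    exact this.ne'
  set c₀ : ℝ := (1/2) * Real.exp ((V₀ - |Real.log C| * M) / (m * v)) with hc₀
  have hc₀0 : 0 < c₀ := by positivity
  refine ⟨min (1/2) c₀, lt_min (by norm_num) hc₀0, ?_⟩
  intro k x hx
  by_contra hcon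
  push_neg at hcon
  have ht2 : h k x < 1/2 := lt_of_lt_of_le hcon (min_le_left _ _)
  have htc : h k x < c₀ := lt_of_lt_of_le hcon (min_le_right _ _)
  obtain ⟨ε, hε, hball⟩ := Metric.isOpen_iff.1 isOpen_interior 0 (h0 k)
  set r := ε/2 with hrdef
  have hr : 0 < r := by positivity
  have hrK : Metric.closedBall (0:EuclideanSpace ℝ (Fin n)) r ⊆ K k := by
    intro y hy
    refine interior_subset (hball ?_)
    rw [Metric.mem_ball]
    have := Metric.mem_closedBall.1 hy
    linarith
  have hxS : ‖x‖ = 1 := by rwa [hS, mem_sphere_zero_iff_norm] at hx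
  have hρmem : ∀ u ∈ S, 0 ≤ ρ k u ∧ (ρ k u) • u ∈ K k := fun u hu => (hρ k u hu).1
  have hρr : ∀ u ∈ S, r ≤ ρ k u := by
    intro u hu
    have huu : ‖u‖ = 1 := by rwa [hS, mem_sphere_zero_iff_norm] at hu
    refine (hρ k u hu).2 ⟨hr.le, hrK ?_⟩
    rw [mem_closedBall_zero_iff, norm_smul, huu, Real.norm_eq_abs, abs_of_nonneg hr.le, mul_one]
  have hρh : ∀ u ∈ S, ρ k u ≤ h k u := by
    intro u hu
    have huu : ‖u‖ = 1 := by rwa [hS, mem_sphere_zero_iff_norm] at hu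
    refine (hh k u hu).2 ⟨(ρ k u) • u, (hρmem u hu).2, ?_⟩
    rw [real_inner_smul_left, real_inner_self_eq_norm_sq, huu]
    norm_num
  have hρC : ∀ u ∈ S, ρ k u ≤ C := fun u hu => le_trans (hρh u hu) (hbound k u hu)
  have hρ0 : ∀ u ∈ S, 0 < ρ k u := fun u hu => lt_of_lt_of_le hr (hρr u hu)
  set t := h k x with htdef
  have htr : r ≤ t := by
    refine (hh k x hx).2 ⟨r • x, hrK ?_, ?_⟩
    · rw [mem_closedBall_zero_iff, norm_smul, hxS, Real.norm_eq_abs, abs_of_nonneg hr.le, mul_one]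
    · rw [real_inner_smul_left, real_inner_self_eq_norm_sq, hxS]; norm_num
  have ht0 : 0 < t := lt_of_lt_of_le hr htr
  -- slab inequality
  have hslab : ∀ u ∈ S, ρ k u * |⟪x, u⟫| ≤ t := by
    intro u hu
    have hyK : (ρ k u) • u ∈ K k := (hρmem u hu).2
    have h1 : ⟪(ρ k u) • u, x⟫ ≤ t := (hh k x hx).2 ⟨_, hyK, rfl⟩
    have h2 : ⟪-((ρ k u) • u), x⟫ ≤ t := (hh k x hx).2 ⟨_, hsymm k _ hyK, rfl⟩
    rw [inner_neg_left] at h2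
    have habs : |⟪(ρ k u) • u, x⟫| ≤ t := abs_le.2 ⟨by linarith, h1⟩
    calc ρ k u * |⟪x, u⟫|
        = |⟪(ρ k u) • u, x⟫| := by
          rw [real_inner_smul_left, abs_mul, abs_of_nonneg (hρmem u hu).1, real_inner_comm]
      _ ≤ t := habs
  -- continuity of the radial function on the sphere
  have hlip := radial_onesided (K k) (hconv k) r C hr hrK (ρ k) (hρ k) hρC
  have hρcont : ContinuousOn (ρ k) S := by
    have hlipOn : LipschitzOnWith (Real.toNNReal (C^2/r)) (ρ k) S := by
      rw [lipschitzOnWith_iff_dist_le_mul]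
      intro a ha b hb
      rw [Real.dist_eq, Real.coe_toNNReal _ (by positivity), abs_sub_le_iff]
      refine ⟨hlip a ha b hb, ?_⟩
      have := hlip b hb a ha
      rwa [dist_comm] at this
    exact hlipOn.continuousOn
  have hFcont : ContinuousOn (fun u => g u * Real.log (ρ k u)) S :=
    hg.continuousOn.mul (hρcont.log fun u hu => (hρ0 u hu).ne')
  have hFmeas : AEStronglyMeasurable (fun u => g u * Real.log (ρ k u)) (μ.restrict S) :=
    hFcont.aestronglyMeasurable hSmeas
  have hFint : IntegrableOn (fun u => g u * Real.log (ρ k u)) S μ := by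
    refine Integrable.mono' (integrable_const (B₁ * (|Real.log r| + |Real.log C|))) hFmeas ?_
    rw [ae_restrict_iff' hSmeas]
    refine .of_forall fun u hu => ?_
    rw [Real.norm_eq_abs, abs_mul]
    have l1 : Real.log r ≤ Real.log (ρ k u) := Real.log_le_log hr (hρr u hu)
    have l2 : Real.log (ρ k u) ≤ Real.log C := Real.log_le_log (hρ0 u hu) (hρC u hu)
    have h1 : |Real.log (ρ k u)| ≤ |Real.log r| + |Real.log C| := by
      rw [abs_le]
      constructor
      · have := neg_abs_le (Real.log r)
        have := abs_nonneg (Real.log C)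
        linarith
      · have := le_abs_self (Real.log C)
        have := abs_nonneg (Real.log r)
        linarith
    exact mul_le_mul (hgb u hu) h1 (abs_nonneg _) (le_trans (abs_nonneg _) (hgb u hu))
  -- the cap
  set Cap := S ∩ {u | 1/2 ≤ |⟪x, u⟫|} with hCap
  have hCapmeas : MeasurableSet Cap := by
    refine hSmeas.inter ?_
    exact (isClosed_le continuous_const
      ((Continuous.inner continuous_const continuous_id).abs)).measurableSet
  have hCapsub : Cap ⊆ S := Set.inter_subset_left
  have hCapfin : μ Cap < ⊤ := lt_of_le_of_lt (measure_mono hCapsub) hSfin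
  have hCapv : v ≤ (μ Cap).toReal := by
    rw [hv]
    exact ENNReal.toReal_mono hCapfin.ne (cap_pos hn1 x hxS)
  have hunion : Cap ∪ (S \ Cap) = S := Set.union_diff_cancel hCapsub
  have hsplit : ∫ u in S, g u * Real.log (ρ k u) ∂μ
      = (∫ u in Cap, g u * Real.log (ρ k u) ∂μ)
        + ∫ u in S \ Cap, g u * Real.log (ρ k u) ∂μ := by
    rw [← setIntegral_union Set.disjoint_sdiff_right (hSmeas.diff hCapmeas)
      (hFint.mono_set hCapsub) (hFint.mono_set Set.diff_subset), hunion]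
  have hlog2t : Real.log (2*t) < 0 := Real.log_neg (by positivity) (by linarith)
  have hA : ∫ u in Cap, g u * Real.log (ρ k u) ∂μ
      ≤ (∫ u in Cap, g u ∂μ) * Real.log (2*t) := by
    have hmono := setIntegral_mono_on (hFint.mono_set hCapsub)
      ((hgint.mono_set hCapsub).mul_const (Real.log (2*t))) hCapmeas ?_
    · rwa [integral_mul_const] at hmono
    · intro u hu
      have huS : u ∈ S := hCapsub hu
      have hcap2 : 1/2 ≤ |⟪x, u⟫| := hu.2
      have hρ2t : ρ k u ≤ 2*t := by
        have := hslab u huS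
        nlinarith [hρ0 u huS]
      exact mul_le_mul_of_nonneg_left (Real.log_le_log (hρ0 u huS) hρ2t) (hgpos u huS).le
  have hAg : m * v ≤ ∫ u in Cap, g u ∂μ := by
    have h1 : ∫ _u in Cap, m ∂μ ≤ ∫ u in Cap, g u ∂μ :=
      setIntegral_mono_on (integrableOn_const hCapfin.ne)
        (hgint.mono_set hCapsub) hCapmeas fun u hu => hmle u (hCapsub hu)
    rw [setIntegral_const, smul_eq_mul, measureReal_def] at h1
    nlinarith [hCapv, hm0]
  have hAub : (∫ u in Cap, g u ∂μ) * Real.log (2*t) ≤ (m*v) * Real.log (2*t) :=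
    mul_le_mul_of_nonpos_right hAg hlog2t.le
  have hB : ∫ u in S \ Cap, g u * Real.log (ρ k u) ∂μ ≤ |Real.log C| * M := by
    have h1 : ∫ u in S \ Cap, g u * Real.log (ρ k u) ∂μ
        ≤ ∫ u in S \ Cap, g u * |Real.log C| ∂μ := by
      refine setIntegral_mono_on (hFint.mono_set Set.diff_subset)
        ((hgint.mono_set Set.diff_subset).mul_const _) (hSmeas.diff hCapmeas) fun u hu => ?_
      have huS : u ∈ S := Set.diff_subset hu
      have : Real.log (ρ k u) ≤ |Real.log C| :=
        le_trans (Real.log_le_log (hρ0 u huS) (hρC u huS)) (le_abs_self _)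
      exact mul_le_mul_of_nonneg_left this (hgpos u huS).le
    have h2 : ∫ u in S \ Cap, g u * |Real.log C| ∂μ ≤ ∫ u in S, g u * |Real.log C| ∂μ := by
      refine setIntegral_mono_set (hgint.mul_const _) ?_ Set.diff_subset.eventuallyLE
      filter_upwards [ae_restrict_mem hSmeas] with u hu
      exact mul_nonneg (hgpos u hu).le (abs_nonneg _)
    rw [integral_mul_const, integral_mul_const] at h2
    rw [integral_mul_const] at h1
    nlinarith [h1, h2]
  have hVle : V₀ ≤ (m*v) * Real.log (2*t) + |Real.log C| * M := by
    have hV := hvol k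
    rw [hsplit] at hV
    linarith
  have hexp : Real.log (2*t) < (V₀ - |Real.log C| * M) / (m*v) := by
    have h2t : Real.log (2*t) < Real.log (2*c₀) := Real.log_lt_log (by positivity) (by linarith)
    rwa [hc₀, show 2*((1/2) * Real.exp ((V₀ - |Real.log C| * M) / (m * v)))
      = Real.exp ((V₀ - |Real.log C| * M) / (m * v)) by ring, Real.log_exp] at h2t
  have hmv : 0 < m*v := by positivity
  rw [lt_div_iff₀ hmv] at hexp
  nlinarith [hexp, hVle]
end
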